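/- Let ‖·‖ be an absolute norm on ℝ². Then ℝ² with this norm and the coordinatewise order is strongly monotone: for every 0 < ε < 1 there is 0 < δ < ε such that whenever x ∈ ℝ² with ‖x‖ ≤ 1 and ‖x⁺‖ > 1 − δ, there exists b ∈ [0,1] with ‖x⁺/‖x⁺‖ − b·x⁻‖ = 1 and ‖b·x⁻ − x⁻‖ < ε. -/

import Mathlib

section Aux
variable (N : ℝ × ℝ → ℝ)

theorem aux_zero (hsmul : ∀ (c : ℝ) (x : ℝ × ℝ), N (c • x) = |c| * N x) :
    N 0 = 0 := by
  have := hsmul 0 0; simpa using this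

theorem aux_neg (hsmul : ∀ (c : ℝ) (x : ℝ × ℝ), N (c • x) = |c| * N x) (x : ℝ × ℝ) :
    N (-x) = N x := by
  have := hsmul (-1) x; simpa using this

theorem aux_nonneg (htri : ∀ x y : ℝ × ℝ, N (x + y) ≤ N x + N y)
    (hsmul : ∀ (c : ℝ) (x : ℝ × ℝ), N (c • x) = |c| * N x) (x : ℝ × ℝ) :
    0 ≤ N x := by
  have h := htri x (-x)
  rw [add_neg_cancel, aux_zero N hsmul, aux_neg N hsmul x] at h
  linarith

end Aux

section Aux2
variable (N : ℝ × ℝ → ℝ)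
    (htri : ∀ x y : ℝ × ℝ, N (x + y) ≤ N x + N y)
    (hsmul : ∀ (c : ℝ) (x : ℝ × ℝ), N (c • x) = |c| * N x)
    (habs : ∀ a b : ℝ, N (a, b) = N (|a|, |b|))

include htri hsmul habs in
theorem aux_mono1 (a a' b : ℝ) (ha : 0 ≤ a) (haa : a ≤ a') :
    N (a, b) ≤ N (a', b) := by
  rcases eq_or_lt_of_le (ha.trans haa) with h | h
  · have h2 : a = 0 := le_antisymm (haa.trans h.symm.le) ha
    rw [h2, ← h]
  · have ha' : a' ≠ 0 := ne_of_gt h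
    have hl0 : 0 ≤ (a + a') / (2 * a') := by positivity
    have hm0 : 0 ≤ (a' - a) / (2 * a') := div_nonneg (by linarith) (by linarith)
    have hkey : ((a, b) : ℝ × ℝ)
        = ((a + a') / (2 * a')) • ((a', b) : ℝ × ℝ)
          + ((a' - a) / (2 * a')) • ((-a', b) : ℝ × ℝ) := by
      simp only [Prod.smul_mk, Prod.mk_add_mk, Prod.mk.injEq, smul_eq_mul]
      constructor <;> (field_simp; ring)
    have hnegeq : N (-a', b) = N (a', b) := by
      rw [habs (-a') b, habs a' b, abs_neg]
    have hsum : (a + a') / (2 * a') + (a' - a) / (2 * a') = 1 := by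
      field_simp; ring
    calc N (a, b)
        ≤ N (((a + a') / (2 * a')) • ((a', b) : ℝ × ℝ))
          + N (((a' - a) / (2 * a')) • ((-a', b) : ℝ × ℝ)) := by
          rw [hkey]; exact htri _ _
      _ = (a + a') / (2 * a') * N (a', b) + (a' - a) / (2 * a') * N (a', b) := by
          rw [hsmul, hsmul, abs_of_nonneg hl0, abs_of_nonneg hm0, hnegeq]
      _ = ((a + a') / (2 * a') + (a' - a) / (2 * a')) * N (a', b) := by ring
      _ = N (a', b) := by rw [hsum, one_mul]

include htri hsmul habs in
theorem aux_mono2 (a b b' : ℝ) (hb : 0 ≤ b) (hbb : b ≤ b') :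
    N (a, b) ≤ N (a, b') := by
  rcases eq_or_lt_of_le (hb.trans hbb) with h | h
  · have h2 : b = 0 := le_antisymm (hbb.trans h.symm.le) hb
    rw [h2, ← h]
  · have hb' : b' ≠ 0 := ne_of_gt h
    have hl0 : 0 ≤ (b + b') / (2 * b') := by positivity
    have hm0 : 0 ≤ (b' - b) / (2 * b') := div_nonneg (by linarith) (by linarith)
    have hkey : ((a, b) : ℝ × ℝ)
        = ((b + b') / (2 * b')) • ((a, b') : ℝ × ℝ)
          + ((b' - b) / (2 * b')) • ((a, -b') : ℝ × ℝ) := by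
      simp only [Prod.smul_mk, Prod.mk_add_mk, Prod.mk.injEq, smul_eq_mul]
      constructor <;> (field_simp; ring)
    have hnegeq : N (a, -b') = N (a, b') := by
      rw [habs a (-b'), habs a b', abs_neg]
    have hsum : (b + b') / (2 * b') + (b' - b) / (2 * b') = 1 := by
      field_simp; ring
    calc N (a, b)
        ≤ N (((b + b') / (2 * b')) • ((a, b') : ℝ × ℝ))
          + N (((b' - b) / (2 * b')) • ((a, -b') : ℝ × ℝ)) := by
          rw [hkey]; exact htri _ _
      _ = (b + b') / (2 * b') * N (a, b') + (b' - b) / (2 * b') * N (a, b') := by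
          rw [hsmul, hsmul, abs_of_nonneg hl0, abs_of_nonneg hm0, hnegeq]
      _ = ((b + b') / (2 * b') + (b' - b) / (2 * b')) * N (a, b') := by ring
      _ = N (a, b') := by rw [hsum, one_mul]

include htri hsmul habs in
theorem aux_mono (a a' b b' : ℝ) (ha : 0 ≤ a) (haa : a ≤ a') (hb : 0 ≤ b) (hbb : b ≤ b') :
    N (a, b) ≤ N (a', b') :=
  (aux_mono1 N htri hsmul habs a a' b ha haa).trans
    (aux_mono2 N htri hsmul habs a' b b' hb hbb)

end Aux2

section Aux3
variable (N : ℝ × ℝ → ℝ)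
    (htri : ∀ x y : ℝ × ℝ, N (x + y) ≤ N x + N y)
    (hsmul : ∀ (c : ℝ) (x : ℝ × ℝ), N (c • x) = |c| * N x)
    (habs : ∀ a b : ℝ, N (a, b) = N (|a|, |b|))

include htri hsmul habs in
theorem aux_key (hn1 : 0 < N (1, 0)) (hn2 : 0 < N (0, 1)) (ε : ℝ) (hε : 0 < ε) :
    ∃ Y η : ℝ, 0 ≤ Y ∧ 0 < η ∧
      (∀ y, 0 ≤ y → y ≤ Y → N (1 / N (1, 0), y) = 1) ∧
      1 + η ≤ N (1 / N (1, 0), Y + ε / N (0, 1)) := by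
  set n1 := N (1, 0) with hn1def
  set n2 := N (0, 1) with hn2def
  -- basic computations
  have hsc1 : ∀ c : ℝ, N (c, 0) = |c| * n1 := fun c => by
    have := hsmul c (1, 0); simpa using this
  have hsc2 : ∀ c : ℝ, N (0, c) = |c| * n2 := fun c => by
    have := hsmul c (0, 1); simpa using this
  have hpsi0 : N (1 / n1, 0) = 1 := by
    rw [hsc1, abs_of_pos (by positivity)]
    field_simp
  have hpsi_ge : ∀ y : ℝ, 0 ≤ y → 1 ≤ N (1 / n1, y) := by
    intro y hy
    calc (1 : ℝ) = N (1 / n1, 0) := hpsi0.symm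
      _ ≤ N (1 / n1, y) := aux_mono2 N htri hsmul habs _ 0 y le_rfl hy
  -- the set S
  set S : Set ℝ := {y : ℝ | 0 ≤ y ∧ N (1 / n1, y) ≤ 1} with hS
  have h0S : (0 : ℝ) ∈ S := ⟨le_rfl, hpsi0.le⟩
  have hSne : S.Nonempty := ⟨0, h0S⟩
  have hSbdd : BddAbove S := by
    refine ⟨1 / n2, fun y hy => ?_⟩
    obtain ⟨hy0, hy1⟩ := hy
    have : N (0, y) ≤ N (1 / n1, y) :=
      aux_mono1 N htri hsmul habs 0 (1 / n1) y le_rfl (by positivity)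
    rw [hsc2, abs_of_nonneg hy0] at this
    rw [le_div_iff₀ hn2]
    linarith [this.trans hy1]
  set Y := sSup S with hY
  have hY0 : 0 ≤ Y := le_csSup hSbdd h0S
  -- lipschitz in second coordinate
  have hlip : ∀ y y' : ℝ, y' ≤ y → N (1 / n1, y) ≤ N (1 / n1, y') + (y - y') * n2 := by
    intro y y' hle
    have hkey : ((1 / n1, y) : ℝ × ℝ) = (1 / n1, y') + (0, y - y') := by
      simp [Prod.mk_add_mk]
    rw [hkey]
    have := htri ((1 / n1, y') : ℝ × ℝ) ((0, y - y') : ℝ × ℝ)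
    rw [hsc2, abs_of_nonneg (by linarith)] at this
    exact this
  -- N (1/n1, Y) ≤ 1
  have hpsiY : N (1 / n1, Y) ≤ 1 := by
    by_contra hc
    push_neg at hc
    have hh0 : 0 < (N (1 / n1, Y) - 1) / n2 := div_pos (by linarith) hn2
    obtain ⟨y, hyS, hylt⟩ := exists_lt_of_lt_csSup hSne
      (show Y - (N (1 / n1, Y) - 1) / n2 < Y by linarith)
    obtain ⟨hy0, hy1⟩ := hyS
    have hyY : y ≤ Y := le_csSup hSbdd ⟨hy0, hy1⟩
    have h2 := hlip Y y hyY
    have h3 : (Y - y) * n2 < ((N (1 / n1, Y) - 1) / n2) * n2 :=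
      mul_lt_mul_of_pos_right (by linarith) hn2
    rw [div_mul_cancel₀ _ (ne_of_gt hn2)] at h3
    linarith
  have hroot : ∀ y, 0 ≤ y → y ≤ Y → N (1 / n1, y) = 1 := by
    intro y hy0 hyY
    have h1 := hpsi_ge y hy0
    have h2 : N (1 / n1, y) ≤ N (1 / n1, Y) :=
      aux_mono2 N htri hsmul habs _ y Y hy0 hyY
    linarith
  -- growth beyond Y
  have hge : 1 ≤ N (1 / n1, Y + ε / n2) := hpsi_ge _ (by positivity)
  have hne : N (1 / n1, Y + ε / n2) ≠ 1 := by
    intro heq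
    have : Y + ε / n2 ∈ S := ⟨by positivity, heq.le⟩
    have := le_csSup hSbdd this
    have : 0 < ε / n2 := by positivity
    linarith
  refine ⟨Y, N (1 / n1, Y + ε / n2) - 1, hY0, ?_, hroot, by linarith⟩
  rcases lt_or_eq_of_le hge with h | h
  · linarith
  · exact absurd h.symm hne

end Aux3

section Aux4
variable (N : ℝ × ℝ → ℝ)
    (htri : ∀ x y : ℝ × ℝ, N (x + y) ≤ N x + N y)
    (hsmul : ∀ (c : ℝ) (x : ℝ × ℝ), N (c • x) = |c| * N x)
    (habs : ∀ a b : ℝ, N (a, b) = N (|a|, |b|))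

include htri hsmul habs in
theorem aux_mixed (hn1 : 0 < N (1, 0)) (hn2 : 0 < N (0, 1))
    (ε Y η δ : ℝ) (hε : 0 < ε) (hη : 0 < η) (hY0 : 0 ≤ Y)
    (hroot : ∀ y, 0 ≤ y → y ≤ Y → N (1 / N (1, 0), y) = 1)
    (hgrow : 1 + η ≤ N (1 / N (1, 0), Y + ε / N (0, 1)))
    (hδη : δ ≤ η / 2) (hδ0 : 0 < δ)
    (p s : ℝ) (hp : 0 < p) (hs : 0 < s)
    (hx : N (p, s) ≤ 1) (ht : 1 - δ < N (p, 0)) :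
    ∃ b : ℝ, b ∈ Set.Icc (0 : ℝ) 1 ∧
      N ((N ((p, 0) : ℝ × ℝ))⁻¹ • ((p, 0) : ℝ × ℝ) - b • ((0, s) : ℝ × ℝ)) = 1 ∧
      N (b • ((0, s) : ℝ × ℝ) - ((0, s) : ℝ × ℝ)) < ε := by
  set n1 := N (1, 0) with hn1def
  set n2 := N (0, 1) with hn2def
  have hsc1 : ∀ c : ℝ, N (c, 0) = |c| * n1 := fun c => by
    have := hsmul c (1, 0); simpa using this
  have hsc2 : ∀ c : ℝ, N (0, c) = |c| * n2 := fun c => by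
    have := hsmul c (0, 1); simpa using this
  have htp : N ((p, 0) : ℝ × ℝ) = p * n1 := by rw [hsc1, abs_of_pos hp]
  -- key claim: s < Y + ε / n2
  have hslt : s < Y + ε / n2 := by
    by_contra hc
    push_neg at hc
    -- N (p, Y + ε/n2) ≤ 1
    have h1 : N (p, Y + ε / n2) ≤ N (p, s) :=
      aux_mono2 N htri hsmul habs p _ s (by positivity) hc
    rcases le_or_gt (1 / n1) p with hcase | hcase
    · have h2 : N (1 / n1, Y + ε / n2) ≤ N (p, Y + ε / n2) :=
        aux_mono1 N htri hsmul habs _ p _ (by positivity) hcase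
      linarith
    · -- p < 1/n1 : use triangle
      have h3 : N (1 / n1, Y + ε / n2) ≤ N (p, Y + ε / n2) + N ((1 / n1 - p, 0) : ℝ × ℝ) := by
        have hkey : ((1 / n1, Y + ε / n2) : ℝ × ℝ)
            = ((p, Y + ε / n2) : ℝ × ℝ) + ((1 / n1 - p, 0) : ℝ × ℝ) := by
          simp [Prod.mk_add_mk]
        rw [hkey]; exact htri _ _
      have h4 : N ((1 / n1 - p, 0) : ℝ × ℝ) = 1 - p * n1 := by
        rw [hsc1, abs_of_pos (by linarith)]
        field_simp
      rw [htp] at ht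
      linarith
  -- choose b
  refine ⟨min 1 (Y / s), ⟨le_min zero_le_one (by positivity), min_le_left _ _⟩, ?_, ?_⟩
  · -- first condition
    have hbs : min 1 (Y / s) * s = min s Y := by
      rcases le_total Y s with h | h
      · rw [min_eq_right (by rw [div_le_one hs]; exact h), min_eq_right h,
          div_mul_cancel₀ _ (ne_of_gt hs)]
      · rw [min_eq_left (by rw [le_div_iff₀ hs]; linarith), min_eq_left h, one_mul]
    have hvec : (N ((p, 0) : ℝ × ℝ))⁻¹ • ((p, 0) : ℝ × ℝ) - min 1 (Y / s) • ((0, s) : ℝ × ℝ)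
        = ((1 / n1, -(min s Y)) : ℝ × ℝ) := by
      rw [htp]
      simp only [Prod.smul_mk, Prod.mk_sub_mk, smul_eq_mul, Prod.mk.injEq]
      constructor
      · field_simp; ring
      · rw [← hbs]; ring
    rw [hvec, habs, abs_neg, abs_of_nonneg (le_min hs.le hY0),
      abs_of_pos (by positivity : (0:ℝ) < 1 / n1)]
    exact hroot _ (le_min hs.le hY0) (min_le_right _ _)
  · -- second condition
    have hvec2 : min 1 (Y / s) • ((0, s) : ℝ × ℝ) - ((0, s) : ℝ × ℝ)
        = ((0, min 1 (Y / s) * s - s) : ℝ × ℝ) := by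
      simp only [Prod.smul_mk, Prod.mk_sub_mk, smul_eq_mul, Prod.mk.injEq]
      constructor <;> simp
    have hbs : min 1 (Y / s) * s = min s Y := by
      rcases le_total Y s with h | h
      · rw [min_eq_right (by rw [div_le_one hs]; exact h), min_eq_right h,
          div_mul_cancel₀ _ (ne_of_gt hs)]
      · rw [min_eq_left (by rw [le_div_iff₀ hs]; linarith), min_eq_left h, one_mul]
    rw [hvec2, hsc2, hbs]
    have habs2 : |min s Y - s| = s - min s Y := by
      rw [abs_of_nonpos (by simp [min_le_left])]
      ring
    rw [habs2]
    rcases le_total Y s with h | h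
    · rw [min_eq_right h]
      have : s - Y < ε / n2 := by linarith
      calc (s - Y) * n2 < ε / n2 * n2 := mul_lt_mul_of_pos_right this hn2
        _ = ε := div_mul_cancel₀ _ (ne_of_gt hn2)
    · rw [min_eq_left h]
      simpa using hε

end Aux4

/-- `ℝ²` with an absolute norm and the coordinatewise order is strongly
monotone, where for `x = (x₁,x₂)` the positive and negative parts are
`x⁺ = (max x₁ 0, max x₂ 0)` and `x⁻ = (max (-x₁) 0, max (-x₂) 0)`. -/
theorem stmt14 (N : ℝ × ℝ → ℝ)
    (htri : ∀ x y : ℝ × ℝ, N (x + y) ≤ N x + N y)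
    (hsmul : ∀ (c : ℝ) (x : ℝ × ℝ), N (c • x) = |c| * N x)
    (hdef : ∀ x : ℝ × ℝ, N x = 0 → x = 0)
    (habs : ∀ a b : ℝ, N (a, b) = N (|a|, |b|))
    (ε : ℝ) (hε0 : 0 < ε) (hε1 : ε < 1) :
    ∃ δ : ℝ, 0 < δ ∧ δ < ε ∧
      ∀ x : ℝ × ℝ, N x ≤ 1 → 1 - δ < N (max x.1 0, max x.2 0) →
        ∃ b : ℝ, b ∈ Set.Icc (0 : ℝ) 1 ∧
          N ((N (max x.1 0, max x.2 0))⁻¹ • ((max x.1 0, max x.2 0) : ℝ × ℝ) -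
              b • ((max (-x.1) 0, max (-x.2) 0) : ℝ × ℝ)) = 1 ∧
          N (b • ((max (-x.1) 0, max (-x.2) 0) : ℝ × ℝ) -
              ((max (-x.1) 0, max (-x.2) 0) : ℝ × ℝ)) < ε := by
  -- positivity of the unit vector norms
  have hn1 : 0 < N (1, 0) := by
    rcases (aux_nonneg N htri hsmul ((1 : ℝ), (0 : ℝ))).eq_or_lt with h | h
    · exfalso
      have := hdef ((1 : ℝ), (0 : ℝ)) h.symm
      rw [Prod.ext_iff] at this
      exact one_ne_zero this.1
    · exact h
  have hn2 : 0 < N (0, 1) := by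
    rcases (aux_nonneg N htri hsmul ((0 : ℝ), (1 : ℝ))).eq_or_lt with h | h
    · exfalso
      have := hdef ((0 : ℝ), (1 : ℝ)) h.symm
      rw [Prod.ext_iff] at this
      exact one_ne_zero this.2
    · exact h
  -- the swapped norm
  have htriM : ∀ x y : ℝ × ℝ,
      (fun w : ℝ × ℝ => N (w.2, w.1)) (x + y)
        ≤ (fun w : ℝ × ℝ => N (w.2, w.1)) x + (fun w : ℝ × ℝ => N (w.2, w.1)) y := by
    intro x y
    simpa [Prod.mk_add_mk] using htri (x.2, x.1) (y.2, y.1)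
  have hsmulM : ∀ (c : ℝ) (x : ℝ × ℝ),
      (fun w : ℝ × ℝ => N (w.2, w.1)) (c • x) = |c| * (fun w : ℝ × ℝ => N (w.2, w.1)) x := by
    intro c x
    simpa [Prod.smul_mk] using hsmul c (x.2, x.1)
  have habsM : ∀ a b : ℝ,
      (fun w : ℝ × ℝ => N (w.2, w.1)) (a, b) = (fun w : ℝ × ℝ => N (w.2, w.1)) (|a|, |b|) := by
    intro a b
    simpa using habs b a
  obtain ⟨Y₁, η₁, hY₁0, hη₁, hroot₁, hgrow₁⟩ :=
    aux_key N htri hsmul habs hn1 hn2 ε hε0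
  obtain ⟨Y₂, η₂, hY₂0, hη₂, hroot₂, hgrow₂⟩ :=
    aux_key (fun w : ℝ × ℝ => N (w.2, w.1)) htriM hsmulM habsM
      (by simpa using hn2) (by simpa using hn1) ε hε0
  refine ⟨min ε (min η₁ η₂) / 2, by positivity, ?_, ?_⟩
  · have : min ε (min η₁ η₂) ≤ ε := min_le_left _ _
    linarith
  intro x hx ht
  set δ := min ε (min η₁ η₂) / 2 with hδ
  have hδ0 : 0 < δ := by positivity
  have hδε : δ ≤ ε / 2 := by
    have : min ε (min η₁ η₂) ≤ ε := min_le_left _ _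
    rw [hδ]; linarith
  have hδη₁ : δ ≤ η₁ / 2 := by
    have : min ε (min η₁ η₂) ≤ η₁ := (min_le_right _ _).trans (min_le_left _ _)
    rw [hδ]; linarith
  have hδη₂ : δ ≤ η₂ / 2 := by
    have : min ε (min η₁ η₂) ≤ η₂ := (min_le_right _ _).trans (min_le_right _ _)
    rw [hδ]; linarith
  have hδ1 : δ < 1 := by linarith
  rcases le_or_gt 0 x.1 with h1 | h1 <;> rcases le_or_gt 0 x.2 with h2 | h2
  · -- both nonnegative : b = 1, x⁻ = 0
    rw [max_eq_left h1, max_eq_left h2] at ht ⊢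
    rw [max_eq_right (by linarith : -x.1 ≤ 0), max_eq_right (by linarith : -x.2 ≤ 0)]
    rw [Prod.mk.eta] at ht ⊢
    refine ⟨1, ⟨zero_le_one, le_rfl⟩, ?_, ?_⟩
    · have hzero : ((0 : ℝ), (0 : ℝ)) = (0 : ℝ × ℝ) := rfl
      have hNx : 0 < N x := by linarith
      rw [hzero, smul_zero, sub_zero, hsmul, abs_of_pos (inv_pos.mpr hNx),
        inv_mul_cancel₀ (ne_of_gt hNx)]
    · have hzero : ((0 : ℝ), (0 : ℝ)) = (0 : ℝ × ℝ) := rfl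
      rw [hzero, smul_zero, zero_sub, neg_zero, aux_zero N hsmul]
      exact hε0
  · -- x.1 ≥ 0, x.2 < 0 : mixed case
    rcases h1.eq_or_lt with h1' | h1'
    · exfalso
      rw [← h1', max_self, max_eq_right h2.le] at ht
      have hzero : ((0 : ℝ), (0 : ℝ)) = (0 : ℝ × ℝ) := rfl
      rw [hzero, aux_zero N hsmul] at ht
      linarith
    · rw [max_eq_left h1, max_eq_right h2.le] at ht ⊢
      rw [max_eq_right (by linarith : -x.1 ≤ 0), max_eq_left (by linarith : 0 ≤ -x.2)]
      have hx' : N (x.1, -x.2) ≤ 1 := by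
        rw [habs, abs_neg, ← habs, Prod.mk.eta]
        exact hx
      exact aux_mixed N htri hsmul habs hn1 hn2 ε Y₁ η₁ δ hε0 hη₁ hY₁0 hroot₁ hgrow₁
        hδη₁ hδ0 x.1 (-x.2) h1' (by linarith) hx' ht
  · -- x.1 < 0, x.2 ≥ 0 : mixed case via swapped norm
    rcases h2.eq_or_lt with h2' | h2'
    · exfalso
      rw [← h2', max_self, max_eq_right h1.le] at ht
      have hzero : ((0 : ℝ), (0 : ℝ)) = (0 : ℝ × ℝ) := rfl
      rw [hzero, aux_zero N hsmul] at ht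
      linarith
    · rw [max_eq_right h1.le, max_eq_left h2] at ht ⊢
      rw [max_eq_left (by linarith : 0 ≤ -x.1), max_eq_right (by linarith : -x.2 ≤ 0)]
      have hx' : (fun w : ℝ × ℝ => N (w.2, w.1)) (x.2, -x.1) ≤ 1 := by
        simp only
        rw [habs, abs_neg, ← habs, Prod.mk.eta]
        exact hx
      have ht' : 1 - δ < (fun w : ℝ × ℝ => N (w.2, w.1)) ((x.2, (0:ℝ))) := by
        simpa using ht
      obtain ⟨b, hb, hcond1, hcond2⟩ :=
        aux_mixed (fun w : ℝ × ℝ => N (w.2, w.1)) htriM hsmulM habsM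
          (by simpa using hn2) (by simpa using hn1) ε Y₂ η₂ δ hε0 hη₂ hY₂0 hroot₂ hgrow₂
          hδη₂ hδ0 x.2 (-x.1) h2' (by linarith) hx' ht'
      refine ⟨b, hb, ?_, ?_⟩
      · simp only [Prod.smul_mk, Prod.mk_sub_mk, smul_eq_mul] at hcond1 ⊢
        convert hcond1 using 3 <;> ring
      · simp only [Prod.smul_mk, Prod.mk_sub_mk, smul_eq_mul] at hcond2 ⊢
        convert hcond2 using 3 <;> ring
  · -- both negative : contradiction
    exfalso
    rw [max_eq_right h1.le, max_eq_right h2.le] at ht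
    have hzero : ((0 : ℝ), (0 : ℝ)) = (0 : ℝ × ℝ) := rfl
    rw [hzero, aux_zero N hsmul] at ht
    linarith
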